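/- For every skip-free GKAT expression e, the pruning transformation satisfies e ≡ ⌊e⌋ using the full axioms (including x·0 = 0): ⌊0⌋ = 0, ⌊p⌋ = p, ⌊e₁ +_b e₂⌋ = ⌊e₁⌋ +_b ⌊e₂⌋, ⌊e₁·e₂⌋ = 0 if e₂ is dead else ⌊e₁⌋·⌊e₂⌋, and ⌊e₁^(b)e₂⌋ = 0 if b̄e₂ is dead else ⌊e₁⌋^(b)⌊e₂⌋. -/

import Mathlib

variable {At : Type} {Act : Type} {X : Type} {Y : Type} {Z : Type}

/-- Skip-free GKAT expressions; tests are represented as Boolean predicates on atoms. -/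
inductive GExp (At Act : Type) : Type
  | zero : GExp At Act
  | act : Act → GExp At Act
  | add : (At → Bool) → GExp At Act → GExp At Act → GExp At Act
  | seq : GExp At Act → GExp At Act → GExp At Act
  | loop : (At → Bool) → GExp At Act → GExp At Act → GExp At Act

/-- The Brzozowski-style small-step semantics (derivative) of skip-free GKAT expressions.
`none` is the failure output ⊥, `some (p, none)` is acceptance with action `p`,
and `some (p, some e')` is a transition to `e'` with action `p`. -/
def gderiv : GExp At Act → At → Option (Act × Option (GExp At Act))
  | .zero, _ => none
  | .act p, _ => some (p, none)
  | .add b e f, α => if b α then gderiv e α else gderiv f α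
  | .seq e f, α =>
      match gderiv e α with
      | none => none
      | some (p, none) => some (p, some f)
      | some (p, some e') => some (p, some (.seq e' f))
  | .loop b e f, α =>
      if b α then
        match gderiv e α with
        | none => none
        | some (p, none) => some (p, some (.loop b e f))
        | some (p, some e') => some (p, some (.seq e' (.loop b e f)))
      else gderiv f α

/-- A skip-free automaton structure on `X`. -/
abbrev SFA (At Act X : Type) := X → At → Option (Act × Option X)

/-- Acceptance of a guarded trace (a nonempty list of atom/action pairs) from a state. -/
inductive Accepts (h : SFA At Act X) : X → List (At × Act) → Prop
  | last {x α p} : h x α = some (p, none) → Accepts h x [(α, p)]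
  | step {x α p x' w} : h x α = some (p, some x') → Accepts h x' w →
      Accepts h x ((α, p) :: w)

/-- The language of guarded traces accepted by a state of a skip-free automaton. -/
def Lang (h : SFA At Act X) (x : X) : Set (List (At × Act)) := {w | Accepts h x w}

/-- Bisimulations between skip-free automata. -/
def IsSFBisim (h : SFA At Act X) (k : SFA At Act Y) (R : X → Y → Prop) : Prop :=
  ∀ ⦃x y⦄, R x y → ∀ α : At,
    (h x α = none ↔ k y α = none) ∧
    (∀ p : Act, h x α = some (p, none) ↔ k y α = some (p, none)) ∧
    (∀ (p : Act) (x' : X), h x α = some (p, some x') →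
      ∃ y' : Y, k y α = some (p, some y') ∧ R x' y')

/-- Bisimilarity of states of skip-free automata. -/
def SFBisimilar (h : SFA At Act X) (k : SFA At Act Y) (x : X) (y : Y) : Prop :=
  ∃ R, IsSFBisim h k R ∧ R x y

/-- A state of a skip-free automaton is dead if it belongs to some set of states closed
under transitions and containing no accepting transitions (the largest such set). -/
def Dead (h : SFA At Act X) (x : X) : Prop :=
  ∃ D : Set X, x ∈ D ∧ ∀ y ∈ D, ∀ α : At,
    h y α = none ∨ ∃ (p : Act) (y' : X), h y α = some (p, some y') ∧ y' ∈ D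

/-- Provable equality `≡` of skip-free GKAT expressions (full axioms, including `x·0 = 0`). -/
inductive GEq : GExp At Act → GExp At Act → Prop
  | refl (e) : GEq e e
  | symm {e f} : GEq e f → GEq f e
  | trans {e f g} : GEq e f → GEq f g → GEq e g
  | congAdd (b) {e e' f f'} : GEq e e' → GEq f f' → GEq (.add b e f) (.add b e' f')
  | congSeq {e e' f f'} : GEq e e' → GEq f f' → GEq (.seq e f) (.seq e' f')
  | congLoop (b) {e e' f f'} : GEq e e' → GEq f f' → GEq (.loop b e f) (.loop b e' f')
  | G0 (e f) : GEq (.add (fun _ => true) e f) e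
  | G1 (b e) : GEq (.add b e e) e
  | G2 (b e f) : GEq (.add b e f) (.add (fun α => !b α) f e)
  | G3 (b c e f g) :
      GEq (.add b e (.add c f g)) (.add (fun α => b α || c α) (.add b e f) g)
  | G6 (e) : GEq (.seq .zero e) .zero
  | dagger (e) : GEq (.seq e .zero) .zero
  | G7 (e f g) : GEq (.seq e (.seq f g)) (.seq (.seq e f) g)
  | G8 (b e f g) : GEq (.seq (.add b e f) g) (.add b (.seq e g) (.seq f g))
  | FP (b e f) : GEq (.loop b e f) (.add b (.seq e (.loop b e f)) f)
  | RSP {b e f g} : GEq g (.add b (.seq e g) f) → GEq g (.loop b e f)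

/-- An expression is dead when it is a dead state of the syntactic skip-free automaton. -/
def DeadE (e : GExp At Act) : Prop := Dead gderiv e

open scoped Classical in
/-- Syntactic pruning of skip-free GKAT expressions. -/
noncomputable def floorE : GExp At Act → GExp At Act
  | .zero => .zero
  | .act p => .act p
  | .add b e f => .add b (floorE e) (floorE f)
  | .seq e f => if DeadE f then .zero else .seq (floorE e) (floorE f)
  | .loop b e f =>
      if DeadE (.add (fun α => !b α) f .zero) then .zero
      else .loop b (floorE e) (floorE f)

/-! ### Auxiliary lemmas for the pruning theorem -/

section Auxiliary

private lemma law_pad (c : At → Bool) (x y z : GExp At Act) :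
    GEq (GExp.add c x y) (GExp.add c (GExp.add c x z) y) := by
  have h1 : GEq (GExp.add c x (GExp.add c z y))
      (GExp.add (fun α => c α || c α) (GExp.add c x z) y) := GEq.G3 c c x z y
  have ht : (fun α => c α || c α) = c := funext fun α => Bool.or_self _
  rw [ht] at h1
  have i1 : GEq (GExp.add c x (GExp.add c z y))
      (GExp.add c x (GExp.add (fun α => !c α) y z)) :=
    GEq.congAdd c (GEq.refl x) (GEq.G2 c z y)
  have i2 : GEq (GExp.add c x (GExp.add (fun α => !c α) y z))
      (GExp.add (fun α => c α || !c α) (GExp.add c x y) z) := GEq.G3 c _ x y z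
  have ht2 : (fun α => c α || !c α) = (fun _ => true) := by
    funext α; cases c α <;> rfl
  rw [ht2] at i2
  have h2 : GEq (GExp.add c x (GExp.add c z y)) (GExp.add c x y) :=
    i1.trans (i2.trans (GEq.G0 _ _))
  exact h2.symm.trans h1

private lemma law_else_pad (b : At → Bool) (x f z : GExp At Act) :
    GEq (GExp.add b x f) (GExp.add b x (GExp.add (fun α => !b α) f z)) :=
  (GEq.G2 b x f).trans ((law_pad _ f x z).trans
    (GEq.G2 b x (GExp.add (fun α => !b α) f z)).symm)

private lemma law_decomp (c b : At → Bool) (e f : GExp At Act) :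
    GEq (GExp.add c (GExp.add b e f) .zero)
      (GExp.add (fun α => c α && b α) e (GExp.add (fun α => c α && !b α) f .zero)) := by
  have s1 : GEq (GExp.add c (GExp.add b e f) .zero)
      (GExp.add (fun α => !c α) .zero (GExp.add b e f)) := GEq.G2 c _ _
  have s2 : GEq (GExp.add (fun α => !c α) .zero (GExp.add b e f))
      (GExp.add (fun α => !c α || b α) (GExp.add (fun α => !c α) .zero e) f) :=
    GEq.G3 _ b .zero e f
  have s3 : GEq (GExp.add (fun α => !c α || b α) (GExp.add (fun α => !c α) .zero e) f)
      (GExp.add (fun α => !(!c α || b α)) f (GExp.add (fun α => !c α) .zero e)) :=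
    GEq.G2 _ _ _
  have s4 : GEq (GExp.add (fun α => !(!c α || b α)) f (GExp.add (fun α => !c α) .zero e))
      (GExp.add (fun α => !(!c α || b α) || !c α)
        (GExp.add (fun α => !(!c α || b α)) f .zero) e) := GEq.G3 _ _ f .zero e
  have ht1 : (fun α => !(!c α || b α) || !c α) = (fun α => !(c α && b α)) := by
    funext α; cases c α <;> cases b α <;> rfl
  have ht2 : (fun α => !(!c α || b α)) = (fun α => c α && !b α) := by
    funext α; cases c α <;> cases b α <;> rfl
  rw [ht2] at s3
  rw [ht1, ht2] at s4
  have s5 : GEq (GExp.add (fun α => c α && b α) e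
        (GExp.add (fun α => c α && !b α) f .zero))
      (GExp.add (fun α => !(c α && b α))
        (GExp.add (fun α => c α && !b α) f .zero) e) := GEq.G2 _ _ _
  exact s1.trans (s2.trans (s3.trans (s4.trans s5.symm)))

private lemma guard_seq (c : At → Bool) (e g : GExp At Act) :
    GEq (GExp.seq (GExp.add c e .zero) g) (GExp.add c (GExp.seq e g) .zero) :=
  (GEq.G8 c e .zero g).trans (GEq.congAdd c (GEq.refl _) (GEq.G6 g))

private lemma loop_zero (b : At → Bool) (e : GExp At Act) :
    GEq (GExp.loop b e .zero) .zero := by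
  have h : GEq (GExp.zero : GExp At Act) (GExp.add b (GExp.seq e .zero) .zero) :=
    ((GEq.G1 b .zero).symm).trans (GEq.congAdd b (GEq.dagger e).symm (GEq.refl _))
  exact (GEq.RSP h).symm

private lemma loop_dead (b : At → Bool) (e f : GExp At Act)
    (h : GEq (GExp.add (fun α => !b α) f .zero) .zero) :
    GEq (GExp.loop b e f) .zero := by
  have h1 : GEq (GExp.loop b e f) (GExp.add b (GExp.seq e (GExp.loop b e f)) .zero) :=
    (GEq.FP b e f).trans
      ((law_else_pad b _ f .zero).trans (GEq.congAdd b (GEq.refl _) h))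
  exact (GEq.RSP h1).trans (loop_zero b e)

private lemma deadE_of (D : Set (GExp At Act))
    (hD : ∀ y ∈ D, ∀ α : At, gderiv y α = none ∨
      ∃ p y', gderiv y α = some (p, some y') ∧ y' ∈ D)
    {x : GExp At Act} (hx : x ∈ D) : DeadE x := ⟨D, hx, hD⟩

private lemma deadE_single (x : GExp At Act) (D : Set (GExp At Act))
    (hD : ∀ y ∈ D, ∀ α : At, gderiv y α = none ∨
      ∃ p y', gderiv y α = some (p, some y') ∧ y' ∈ D)
    (hx : ∀ α : At, gderiv x α = none ∨
      ∃ p y', gderiv x α = some (p, some y') ∧ y' ∈ D) : DeadE x := by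
  refine ⟨insert x D, Set.mem_insert _ _, ?_⟩
  intro y hy α
  rcases Set.mem_insert_iff.mp hy with rfl | hy
  · rcases hx α with h | ⟨p, y', h1, h2⟩
    · exact Or.inl h
    · exact Or.inr ⟨p, y', h1, Set.mem_insert_of_mem _ h2⟩
  · rcases hD y hy α with h | ⟨p, y', h1, h2⟩
    · exact Or.inl h
    · exact Or.inr ⟨p, y', h1, Set.mem_insert_of_mem _ h2⟩

private lemma dead_guard : ∀ (e : GExp At Act) (c : At → Bool),
    DeadE (GExp.add c e .zero) → GEq (GExp.add c e .zero) .zero := by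
  intro e
  induction e with
  | zero => exact fun c _ => GEq.G1 c .zero
  | act p =>
    intro c hd
    obtain ⟨D, hmem, hD⟩ := hd
    have hc : c = fun _ => false := by
      funext α
      rcases hD _ hmem α with h | ⟨q, y', h1, _⟩
      · by_contra hα
        have hcα : c α = true := by revert hα; cases c α <;> simp
        simp [gderiv, hcα] at h
      · by_contra hα
        have hcα : c α = true := by revert hα; cases c α <;> simp
        simp [gderiv, hcα] at h1
    subst hc
    exact (GEq.G2 _ _ _).trans (GEq.G0 .zero (.act p))
  | add b e1 e2 ih1 ih2 =>
    intro c hd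
    obtain ⟨D, hmem, hD⟩ := hd
    have d1 : DeadE (GExp.add (fun α => c α && b α) e1 .zero) := by
      refine deadE_single _ D hD ?_
      intro α
      cases hca : c α with
      | false => exact Or.inl (by simp [gderiv, hca])
      | true =>
        cases hba : b α with
        | false => exact Or.inl (by simp [gderiv, hca, hba])
        | true => simpa [gderiv, hca, hba] using hD _ hmem α
    have d2 : DeadE (GExp.add (fun α => c α && !b α) e2 .zero) := by
      refine deadE_single _ D hD ?_
      intro α
      cases hca : c α with
      | false => exact Or.inl (by simp [gderiv, hca])
      | true =>
        cases hba : b α with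
        | true => exact Or.inl (by simp [gderiv, hca, hba])
        | false => simpa [gderiv, hca, hba] using hD _ hmem α
    have g1 := ih1 _ d1
    have g2 := ih2 _ d2
    exact (law_decomp c b e1 e2).trans ((GEq.congAdd _ (GEq.refl e1) g2).trans g1)
  | seq e1 e2 ih1 ih2 =>
    intro c hd
    obtain ⟨D, hmem, hD⟩ := hd
    by_cases hf : DeadE e2
    · obtain ⟨D0, hm0, hD0⟩ := hf
      have d2 : DeadE (GExp.add (fun _ => true) e2 .zero) := by
        refine deadE_single _ D0 hD0 ?_
        intro α
        simpa [gderiv] using hD0 _ hm0 α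
      have g2 : GEq e2 .zero := (GEq.G0 e2 .zero).symm.trans (ih2 _ d2)
      exact (GEq.congAdd c (GEq.congSeq (GEq.refl e1) g2) (GEq.refl _)).trans
        ((GEq.congAdd c (GEq.dagger e1) (GEq.refl _)).trans (GEq.G1 c .zero))
    · have key : ∀ x : GExp At Act, GExp.seq x e2 ∈ D → ∀ α,
          gderiv x α = none ∨
            ∃ p x', gderiv x α = some (p, some x') ∧ GExp.seq x' e2 ∈ D := by
        intro x hx α
        have h := hD _ hx α
        cases hxa : gderiv x α with
        | none => exact Or.inl rfl
        | some v =>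
          obtain ⟨p, oe⟩ := v
          cases oe with
          | none =>
            exfalso
            rw [show gderiv (GExp.seq x e2) α = some (p, some e2) from by
              simp [gderiv, hxa]] at h
            rcases h with h | ⟨q, y', h1, h2⟩
            · exact (Option.some_ne_none _ h).elim
            · simp only [Option.some.injEq, Prod.mk.injEq] at h1
              exact hf (deadE_of D hD (by rw [h1.2]; exact h2))
          | some x' =>
            right
            rw [show gderiv (GExp.seq x e2) α = some (p, some (GExp.seq x' e2)) from by
              simp [gderiv, hxa]] at h
            rcases h with h | ⟨q, y', h1, h2⟩
            · exact (Option.some_ne_none _ h).elim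
            · simp only [Option.some.injEq, Prod.mk.injEq] at h1
              exact ⟨p, x', rfl, by rw [h1.2]; exact h2⟩
      have hE : ∀ y ∈ {x : GExp At Act | x = GExp.add c e1 .zero ∨ GExp.seq x e2 ∈ D},
          ∀ α, gderiv y α = none ∨ ∃ p y', gderiv y α = some (p, some y') ∧
            y' ∈ {x : GExp At Act | x = GExp.add c e1 .zero ∨ GExp.seq x e2 ∈ D} := by
        intro y hy α
        rcases hy with rfl | hy
        · cases hca : c α with
          | false => exact Or.inl (by simp [gderiv, hca])
          | true =>
            have h := hD _ hmem α
            cases hxa : gderiv e1 α with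
            | none => exact Or.inl (by simp [gderiv, hca, hxa])
            | some v =>
              obtain ⟨p, oe⟩ := v
              cases oe with
              | none =>
                exfalso
                rw [show gderiv (GExp.add c (GExp.seq e1 e2) .zero) α
                    = some (p, some e2) from by simp [gderiv, hca, hxa]] at h
                rcases h with h | ⟨q, y', h1, h2⟩
                · exact (Option.some_ne_none _ h).elim
                · simp only [Option.some.injEq, Prod.mk.injEq] at h1
                  exact hf (deadE_of D hD (by rw [h1.2]; exact h2))
              | some e' =>
                right
                rw [show gderiv (GExp.add c (GExp.seq e1 e2) .zero) α
                    = some (p, some (GExp.seq e' e2)) from by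
                  simp [gderiv, hca, hxa]] at h
                rcases h with h | ⟨q, y', h1, h2⟩
                · exact (Option.some_ne_none _ h).elim
                · simp only [Option.some.injEq, Prod.mk.injEq] at h1
                  refine ⟨p, e', by simp [gderiv, hca, hxa], ?_⟩
                  exact Or.inr (by rw [h1.2]; exact h2)
        · rcases key y hy α with h | ⟨p, x', h1, h2⟩
          · exact Or.inl h
          · exact Or.inr ⟨p, x', h1, Or.inr h2⟩
      have d1 : DeadE (GExp.add c e1 .zero) := ⟨_, Or.inl rfl, hE⟩
      have g1 := ih1 c d1
      exact (guard_seq c e1 e2).symm.trans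
        ((GEq.congSeq g1 (GEq.refl e2)).trans (GEq.G6 e2))
  | loop b e1 e2 ih1 ih2 =>
    intro c hd
    obtain ⟨D, hmem, hD⟩ := hd
    by_cases hL : DeadE (GExp.loop b e1 e2)
    · obtain ⟨D0, hm0, hD0⟩ := hL
      have d2 : DeadE (GExp.add (fun α => !b α) e2 .zero) := by
        refine deadE_single _ D0 hD0 ?_
        intro α
        cases hba : b α with
        | true => exact Or.inl (by simp [gderiv, hba])
        | false => simpa [gderiv, hba] using hD0 _ hm0 α
      have g2 := ih2 _ d2
      have gL : GEq (GExp.loop b e1 e2) .zero := loop_dead b e1 e2 g2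
      exact (GEq.congAdd c gL (GEq.refl _)).trans (GEq.G1 c .zero)
    · have key : ∀ x : GExp At Act, GExp.seq x (GExp.loop b e1 e2) ∈ D → ∀ α,
          gderiv x α = none ∨ ∃ p x', gderiv x α = some (p, some x') ∧
            GExp.seq x' (GExp.loop b e1 e2) ∈ D := by
        intro x hx α
        have h := hD _ hx α
        cases hxa : gderiv x α with
        | none => exact Or.inl rfl
        | some v =>
          obtain ⟨p, oe⟩ := v
          cases oe with
          | none =>
            exfalso
            rw [show gderiv (GExp.seq x (GExp.loop b e1 e2)) α
                = some (p, some (GExp.loop b e1 e2)) from by simp [gderiv, hxa]] at h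
            rcases h with h | ⟨q, y', h1, h2⟩
            · exact (Option.some_ne_none _ h).elim
            · simp only [Option.some.injEq, Prod.mk.injEq] at h1
              exact hL (deadE_of D hD (by rw [h1.2]; exact h2))
          | some x' =>
            right
            rw [show gderiv (GExp.seq x (GExp.loop b e1 e2)) α
                = some (p, some (GExp.seq x' (GExp.loop b e1 e2))) from by
              simp [gderiv, hxa]] at h
            rcases h with h | ⟨q, y', h1, h2⟩
            · exact (Option.some_ne_none _ h).elim
            · simp only [Option.some.injEq, Prod.mk.injEq] at h1
              exact ⟨p, x', rfl, by rw [h1.2]; exact h2⟩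
      have d2 : DeadE (GExp.add (fun α => c α && !b α) e2 .zero) := by
        refine deadE_single _ D hD ?_
        intro α
        cases hca : c α with
        | false => exact Or.inl (by simp [gderiv, hca])
        | true =>
          cases hba : b α with
          | true => exact Or.inl (by simp [gderiv, hca, hba])
          | false => simpa [gderiv, hca, hba] using hD _ hmem α
      have g2 := ih2 _ d2
      have hE : ∀ y ∈ {x : GExp At Act | x = GExp.add (fun α => c α && b α) e1 .zero ∨
            GExp.seq x (GExp.loop b e1 e2) ∈ D},
          ∀ α, gderiv y α = none ∨ ∃ p y', gderiv y α = some (p, some y') ∧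
            y' ∈ {x : GExp At Act | x = GExp.add (fun α => c α && b α) e1 .zero ∨
              GExp.seq x (GExp.loop b e1 e2) ∈ D} := by
        intro y hy α
        rcases hy with rfl | hy
        · cases hca : c α with
          | false => exact Or.inl (by simp [gderiv, hca])
          | true =>
            cases hba : b α with
            | false => exact Or.inl (by simp [gderiv, hca, hba])
            | true =>
              have h := hD _ hmem α
              cases hxa : gderiv e1 α with
              | none => exact Or.inl (by simp [gderiv, hca, hba, hxa])
              | some v =>
                obtain ⟨p, oe⟩ := v
                cases oe with
                | none =>
                  exfalso
                  rw [show gderiv (GExp.add c (GExp.loop b e1 e2) .zero) α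
                      = some (p, some (GExp.loop b e1 e2)) from by
                    simp [gderiv, hca, hba, hxa]] at h
                  rcases h with h | ⟨q, y', h1, h2⟩
                  · exact (Option.some_ne_none _ h).elim
                  · simp only [Option.some.injEq, Prod.mk.injEq] at h1
                    exact hL (deadE_of D hD (by rw [h1.2]; exact h2))
                | some e' =>
                  right
                  rw [show gderiv (GExp.add c (GExp.loop b e1 e2) .zero) α
                      = some (p, some (GExp.seq e' (GExp.loop b e1 e2))) from by
                    simp [gderiv, hca, hba, hxa]] at h
                  rcases h with h | ⟨q, y', h1, h2⟩
                  · exact (Option.some_ne_none _ h).elim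
                  · simp only [Option.some.injEq, Prod.mk.injEq] at h1
                    refine ⟨p, e', by simp [gderiv, hca, hba, hxa], ?_⟩
                    exact Or.inr (by rw [h1.2]; exact h2)
        · rcases key y hy α with h | ⟨p, x', h1, h2⟩
          · exact Or.inl h
          · exact Or.inr ⟨p, x', h1, Or.inr h2⟩
      have d1 : DeadE (GExp.add (fun α => c α && b α) e1 .zero) := ⟨_, Or.inl rfl, hE⟩
      have g1 := ih1 _ d1
      exact (GEq.congAdd c (GEq.FP b e1 e2) (GEq.refl _)).trans
        ((law_decomp c b (GExp.seq e1 (GExp.loop b e1 e2)) e2).trans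
          ((GEq.congAdd _ (GEq.refl _) g2).trans
            ((guard_seq (fun α => c α && b α) e1 (GExp.loop b e1 e2)).symm.trans
              ((GEq.congSeq g1 (GEq.refl _)).trans (GEq.G6 _)))))

private lemma geq_zero_of_dead {e : GExp At Act} (h : DeadE e) : GEq e .zero := by
  obtain ⟨D, hm, hD⟩ := h
  have d : DeadE (GExp.add (fun _ => true) e .zero) :=
    deadE_single _ D hD (by intro α; simpa [gderiv] using hD _ hm α)
  exact (GEq.G0 e .zero).symm.trans (dead_guard e _ d)

end Auxiliary

/-- every skip-free GKAT expression is provably equal (using the full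
axioms, including `x·0 = 0`) to its pruning `⌊e⌋`. -/
theorem floor_preserves_equiv (e : GExp At Act) : GEq e (floorE e) := by
  induction e with
  | zero => exact GEq.refl _
  | act p => exact GEq.refl _
  | add b e f ihe ihf =>
    simp only [floorE]
    exact GEq.congAdd b ihe ihf
  | seq e f ihe ihf =>
    by_cases h : DeadE f
    · simp only [floorE, if_pos h]
      exact (GEq.congSeq (GEq.refl e) (geq_zero_of_dead h)).trans (GEq.dagger e)
    · simp only [floorE, if_neg h]
      exact GEq.congSeq ihe ihf
  | loop b e f ihe ihf =>
    by_cases h : DeadE (GExp.add (fun α => !b α) f .zero)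
    · simp only [floorE, if_pos h]
      exact loop_dead b e f (geq_zero_of_dead h)
    · simp only [floorE, if_neg h]
      exact GEq.congLoop b ihe ihf
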